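/- Let G be a finite group acting 2-transitively on Ω and suppose the minimum eigenvalue of the derangement graph Γ_G equals -|𝒟|/(|Ω|-1), where 𝒟 is the set of derangements. Then every intersecting set in G has cardinality at most |G|/|Ω|. -/

import Mathlib

open Finset MulAction in
theorem aux_derangement' {G : Type*} [Group G] [Fintype G] [DecidableEq G]
    {Ω : Type*} [Fintype Ω] [DecidableEq Ω] [MulAction G Ω]
    [IsPretransitive G Ω] (hcard : 2 ≤ Fintype.card Ω) :
    ∃ g : G, ∀ ω : Ω, g • ω ≠ ω := by
  classical
  by_contra hcon
  push_neg at hcon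
  have hstab : ∀ ω : Ω, Fintype.card Ω * (univ.filter fun g : G => g • ω = ω).card
      = Fintype.card G := by
    intro ω
    have h1 := card_orbit_mul_card_stabilizer_eq_card_group G ω
    have h2 : Fintype.card (orbit G ω) = Fintype.card Ω := by
      have : (orbit G ω) = Set.univ := orbit_eq_univ G ω
      rw [Fintype.card_congr (Equiv.setCongr this), Fintype.card_congr (Equiv.Set.univ Ω)]
    have h3 : Fintype.card (stabilizer G ω) = (univ.filter fun g : G => g • ω = ω).card := by
      rw [← Fintype.card_subtype]
      exact Fintype.card_congr (Equiv.subtypeEquivRight fun g => mem_stabilizer_iff)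
    rw [h2, h3] at h1
    exact h1
  have hT : Fintype.card Ω * ∑ g : G, (univ.filter fun ω : Ω => g • ω = ω).card
      = Fintype.card Ω * Fintype.card G := by
    rw [Finset.mul_sum]
    calc ∑ g : G, Fintype.card Ω * (univ.filter fun ω : Ω => g • ω = ω).card
        = ∑ g : G, ∑ ω : Ω, (if g • ω = ω then Fintype.card Ω else 0) := by
          simp [Finset.sum_ite, Finset.sum_const, mul_comm]
      _ = ∑ ω : Ω, ∑ g : G, (if g • ω = ω then Fintype.card Ω else 0) := Finset.sum_comm
      _ = ∑ ω : Ω, Fintype.card Ω * (univ.filter fun g : G => g • ω = ω).card := by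
          simp [Finset.sum_ite, Finset.sum_const, mul_comm]
      _ = ∑ ω : Ω, Fintype.card G := by simp_rw [hstab]
      _ = Fintype.card Ω * Fintype.card G := by simp [Finset.sum_const, mul_comm]
  have hT' : ∑ g : G, (univ.filter fun ω : Ω => g • ω = ω).card = Fintype.card G :=
    Nat.eq_of_mul_eq_mul_left (by omega) hT
  have hone : (univ.filter fun ω : Ω => (1:G) • ω = ω).card = Fintype.card Ω := by
    simp [Finset.filter_true_of_mem]
  have hge : ∀ g : G, 1 ≤ (univ.filter fun ω : Ω => g • ω = ω).card := by
    intro g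
    obtain ⟨ω, hω⟩ := hcon g
    exact Finset.card_pos.mpr ⟨ω, by simp [hω]⟩
  have hsplit : ∑ g : G, (univ.filter fun ω : Ω => g • ω = ω).card
      = (univ.filter fun ω : Ω => (1:G) • ω = ω).card
        + ∑ g ∈ univ.erase (1:G), (univ.filter fun ω : Ω => g • ω = ω).card :=
    (Finset.add_sum_erase univ _ (Finset.mem_univ 1)).symm
  have hlb : Fintype.card G - 1 ≤ ∑ g ∈ univ.erase (1:G),
      (univ.filter fun ω : Ω => g • ω = ω).card := by
    calc Fintype.card G - 1 = (univ.erase (1:G)).card := by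
          rw [Finset.card_erase_of_mem (Finset.mem_univ 1), Finset.card_univ]
      _ = ∑ _g ∈ univ.erase (1:G), 1 := by rw [Finset.card_eq_sum_ones]
      _ ≤ _ := Finset.sum_le_sum fun i _ => hge i
  have hG : 1 ≤ Fintype.card G := Fintype.card_pos
  omega

open Matrix Finset in
theorem intersecting_bound_of_min_eigenvalue
    {G : Type*} [Group G] [Fintype G] [DecidableEq G]
    {Ω : Type*} [Fintype Ω] [DecidableEq Ω] [MulAction G Ω]
    (hcard : 2 ≤ Fintype.card Ω)
    (h2 : ∀ a b c d : Ω, a ≠ b → c ≠ d → ∃ g : G, g • a = c ∧ g • b = d)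
    (D : Finset G) (hD : D = Finset.univ.filter (fun g : G => ∀ ω : Ω, g • ω ≠ ω))
    (A : Matrix G G ℝ)
    (hA : ∀ g h : G, A g h = if g * h⁻¹ ∈ D then 1 else 0)
    (hspec : -(D.card : ℝ) / ((Fintype.card Ω : ℝ) - 1) ∈ spectrum ℝ A)
    (hmin : ∀ μ ∈ spectrum ℝ A, -(D.card : ℝ) / ((Fintype.card Ω : ℝ) - 1) ≤ μ)
    (S : Finset G)
    (hS : ∀ g ∈ S, ∀ h ∈ S, ∃ ω : Ω, (g * h⁻¹) • ω = ω) :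
    S.card * Fintype.card Ω ≤ Fintype.card G := by
  classical
  haveI : MulAction.IsPretransitive G Ω := by
    constructor
    intro a b
    by_cases hab : a = b
    · obtain ⟨c, hc⟩ := Fintype.exists_ne_of_one_lt_card (by omega) a
      obtain ⟨g, hg1, _⟩ := h2 a c a c (Ne.symm hc) (Ne.symm hc)
      exact ⟨g, by rw [hg1, hab]⟩
    · obtain ⟨c, hc⟩ := Fintype.exists_ne_of_one_lt_card (by omega) a
      obtain ⟨e, he⟩ := Fintype.exists_ne_of_one_lt_card (by omega) b
      obtain ⟨g, hg1, _⟩ := h2 a c b e (Ne.symm hc) (Ne.symm he)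
      exact ⟨g, hg1⟩
  obtain ⟨g₀, hg₀⟩ := aux_derangement' (G := G) (Ω := Ω) hcard
  have hmemD : ∀ u : G, u ∈ D ↔ ∀ ω : Ω, u • ω ≠ ω := by
    intro u; rw [hD]; simp
  have hd1 : 1 ≤ D.card := Finset.card_pos.mpr ⟨g₀, (hmemD g₀).mpr hg₀⟩
  set n := Fintype.card G with hn
  set k := Fintype.card Ω with hk
  set s := S.card with hs
  set d := D.card with hd
  set τ : ℝ := -(d : ℝ) / ((k : ℝ) - 1) with hτdef
  -- basic inequalities
  have hk2 : (2 : ℝ) ≤ (k : ℝ) := by exact_mod_cast hcard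
  have hk1pos : (0 : ℝ) < (k : ℝ) - 1 := by linarith
  have hd1r : (1 : ℝ) ≤ (d : ℝ) := by exact_mod_cast hd1
  have hn1 : (1 : ℝ) ≤ (n : ℝ) := by exact_mod_cast Fintype.card_pos (α := G)
  -- D is inverse closed, A symmetric
  have hfix : ∀ (v : G) (ω : Ω), v • ω = ω → v⁻¹ • ω = ω := by
    intro v ω h; conv_lhs => rw [← h]
    rw [inv_smul_smul]
  have hDinv : ∀ u : G, u⁻¹ ∈ D ↔ u ∈ D := by
    intro u
    rw [hmemD, hmemD]
    constructor
    · intro h ω hω; exact h ω (hfix u ω hω)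
    · intro h ω hω
      have := hfix u⁻¹ ω hω
      rw [inv_inv] at this
      exact h ω this
  have hsym : ∀ g h : G, A g h = A h g := by
    intro g h
    rw [hA, hA]
    have hrel : h * g⁻¹ = (g * h⁻¹)⁻¹ := by simp [_root_.mul_inv_rev]
    by_cases hm : g * h⁻¹ ∈ D
    · rw [if_pos hm, if_pos (by rw [hrel, hDinv]; exact hm)]
    · rw [if_neg hm, if_neg (by rw [hrel, hDinv]; exact hm)]
  have hermA : A.IsHermitian := by
    ext g h
    rw [Matrix.conjTranspose_apply, star_trivial]
    exact hsym h g
  set M : Matrix G G ℝ := A - τ • 1 with hMdef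
  have hermM : M.IsHermitian := by
    have h1 : (τ • (1 : Matrix G G ℝ)).IsHermitian := by
      ext g h
      rw [Matrix.conjTranspose_apply, star_trivial, Matrix.smul_apply, Matrix.smul_apply,
        Matrix.one_apply, Matrix.one_apply]
      by_cases hgh : g = h <;> simp [hgh, eq_comm]
    exact hermA.sub h1
  have hpsd : M.PosSemidef := by
    apply hermM.posSemidef_iff_eigenvalues_nonneg.mpr
    intro i
    show (0:ℝ) ≤ hermM.eigenvalues i
    have hmem : hermM.eigenvalues i ∈ spectrum ℝ (A - (algebraMap ℝ (Matrix G G ℝ)) τ) := by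
      rw [Algebra.algebraMap_eq_smul_one]
      exact hermM.eigenvalues_mem_spectrum_real i
    rw [← spectrum.sub_singleton_eq] at hmem
    obtain ⟨ν, hν, t, ht, hh⟩ := Set.mem_sub.mp hmem
    have ht' : t = τ := ht
    have hb := hmin ν hν
    rw [← hh, ht']
    linarith
  -- the vectors
  set x : G → ℝ := fun g => if g ∈ S then 1 else 0 with hx
  set o : G → ℝ := fun _ => 1 with ho
  set y : G → ℝ := (n : ℝ) • x - (s : ℝ) • o with hy
  -- basic sums
  have hxsum : ∑ g : G, x g = (s : ℝ) := by
    simp [hx, Finset.sum_ite_mem, hs]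
  have hrow : ∀ g : G, ∑ h : G, A g h = (d : ℝ) := by
    intro g
    calc ∑ h : G, A g h = ∑ h : G, (if g * h⁻¹ ∈ D then (1:ℝ) else 0) := by
          simp_rw [hA]
      _ = ∑ u : G, (if u ∈ D then (1:ℝ) else 0) :=
          Fintype.sum_equiv ((Equiv.inv G).trans (Equiv.mulLeft g)) _ _ (fun h => by simp)
      _ = (d : ℝ) := by simp [Finset.sum_ite_mem, hd]
  have hcol : ∀ h : G, ∑ g : G, A g h = (d : ℝ) := by
    intro h
    calc ∑ g : G, A g h = ∑ g : G, (if g * h⁻¹ ∈ D then (1:ℝ) else 0) := by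
          simp_rw [hA]
      _ = ∑ u : G, (if u ∈ D then (1:ℝ) else 0) :=
          Fintype.sum_equiv (Equiv.mulRight h⁻¹) _ _ (fun g => by simp; congr)
      _ = (d : ℝ) := by simp [Finset.sum_ite_mem, hd]
  have hA1 : A *ᵥ o = fun _ => (d : ℝ) := by
    funext g
    simp only [Matrix.mulVec, dotProduct, ho, mul_one]
    exact hrow g
  have hAS : ∀ g ∈ S, ∀ h ∈ S, A g h = 0 := by
    intro g hg h hh
    rw [hA, if_neg]
    intro hmem
    obtain ⟨ω, hω⟩ := hS g hg h hh
    exact ((hmemD _).mp hmem) ω hω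
  have hAxx : x ⬝ᵥ (A *ᵥ x) = 0 := by
    simp only [dotProduct, Matrix.mulVec]
    apply Finset.sum_eq_zero
    intro g _
    by_cases hg : g ∈ S
    · apply mul_eq_zero_of_right
      apply Finset.sum_eq_zero
      intro h _
      by_cases hh : h ∈ S
      · rw [hAS g hg h hh, zero_mul]
      · simp [hx, hh]
    · simp [hx, hg]
  have h1Ax : o ⬝ᵥ (A *ᵥ x) = (d : ℝ) * s := by
    simp only [dotProduct, Matrix.mulVec, ho, one_mul]
    rw [Finset.sum_comm]
    calc ∑ h : G, ∑ g : G, A g h * x h = ∑ h : G, (∑ g : G, A g h) * x h := by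
          simp [Finset.sum_mul]
      _ = ∑ h : G, (d : ℝ) * x h := by simp_rw [hcol]
      _ = (d : ℝ) * s := by rw [← Finset.mul_sum, hxsum]
  have hxA1 : x ⬝ᵥ (A *ᵥ o) = (s : ℝ) * d := by
    rw [hA1]
    simp only [dotProduct]
    rw [← Finset.sum_mul, hxsum]
  have h1A1 : o ⬝ᵥ (A *ᵥ o) = (n : ℝ) * d := by
    rw [hA1]
    simp [dotProduct, ho, hn, Finset.card_univ, mul_comm]
  have hxx : x ⬝ᵥ x = (s : ℝ) := by
    have hsq : ∀ g : G, x g * x g = x g := by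
      intro g; by_cases h : g ∈ S <;> simp [hx, h]
    simp only [dotProduct, hsq]
    exact hxsum
  have hx1 : x ⬝ᵥ o = (s : ℝ) := by
    simp only [dotProduct, ho, mul_one]; exact hxsum
  have h1x : o ⬝ᵥ x = (s : ℝ) := by
    simp only [dotProduct, ho, one_mul]; exact hxsum
  have h11 : o ⬝ᵥ o = (n : ℝ) := by
    simp [dotProduct, ho, hn, Finset.card_univ]
  -- quadratic form values
  have hyay : y ⬝ᵥ (A *ᵥ y) = -((n : ℝ) * d * s ^ 2) := by
    simp only [hy, Matrix.mulVec_sub, Matrix.mulVec_smul, sub_dotProduct,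
      smul_dotProduct, dotProduct_sub, dotProduct_smul, smul_eq_mul]
    rw [hAxx, hxA1, h1Ax, h1A1]
    ring
  have hyy : y ⬝ᵥ y = (n : ℝ) ^ 2 * s - (n : ℝ) * s ^ 2 := by
    simp only [hy, sub_dotProduct, smul_dotProduct, dotProduct_sub,
      dotProduct_smul, smul_eq_mul]
    rw [hxx, hx1, h1x, h11]
    ring
  have hq : (0:ℝ) ≤ y ⬝ᵥ (M *ᵥ y) := by
    have := hpsd.dotProduct_mulVec_nonneg y
    rwa [star_trivial] at this
  have hdot : y ⬝ᵥ (M *ᵥ y) = -((n : ℝ) * d * s ^ 2) - τ * ((n : ℝ) ^ 2 * s - (n : ℝ) * s ^ 2) := by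
    rw [hMdef, Matrix.sub_mulVec, Matrix.smul_mulVec, Matrix.one_mulVec,
      dotProduct_sub, dotProduct_smul, smul_eq_mul, hyay, hyy]
  have h0 : (0:ℝ) ≤ -((n : ℝ) * d * s ^ 2) - τ * ((n : ℝ) ^ 2 * s - (n : ℝ) * s ^ 2) := by
    rw [← hdot]; exact hq
  have h1 : (0:ℝ) ≤ (-((n : ℝ) * d * s ^ 2) - τ * ((n : ℝ) ^ 2 * s - (n : ℝ) * s ^ 2))
      * ((k : ℝ) - 1) := mul_nonneg h0 (le_of_lt hk1pos)
  have h2' : (-((n : ℝ) * d * s ^ 2) - τ * ((n : ℝ) ^ 2 * s - (n : ℝ) * s ^ 2)) * ((k : ℝ) - 1)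
      = ((d : ℝ) * n * s) * ((n : ℝ) - s * k) := by
    rw [hτdef]
    field_simp
    ring
  rw [h2'] at h1
  -- conclude
  by_cases hs0 : s = 0
  · rw [hs0, zero_mul]; omega
  · have hs1 : (1 : ℝ) ≤ (s : ℝ) := by
      have : 1 ≤ s := Nat.one_le_iff_ne_zero.mpr hs0
      exact_mod_cast this
    have hpos : (0:ℝ) < (d : ℝ) * n * s := by positivity
    have hfinal : (0:ℝ) ≤ (n : ℝ) - s * k := nonneg_of_mul_nonneg_right h1 hpos
    have : (s : ℝ) * k ≤ (n : ℝ) := by linarith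
    exact_mod_cast this
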